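/- In the dilation setting, for all p, r ∈ P the following hold: (i) V(p)V(q)*V(r)T + V(q)*V(p)TT*V(r)T = V(q)*V(pr)T, and (ii) (T*V(p)T)(T*V(r)T) = T*V(pr)T. (These identities express that p ↦ V₁(p) = [[V(p), V(q)*V(p)T],[0, T*V(p)T]] is multiplicative on H ⊕ L.) -/

import Mathlib

open ContinuousLinearMap

theorem stmt_10 {A : Type*} [CStarAlgebra A]
    {P : Type*} [CommMonoid P]
    (α : P → (A →⋆ₙₐ[ℂ] A))
    (hinj : ∀ p : P, Function.Injective (α p))
    (hcomp : ∀ (p r : P) (a : A), α p (α r a) = α (p * r) a)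
    (haligned : ∀ p r : P, α p 1 * α r 1 = α r 1 * α p 1)
    (hhered : ∀ (p : P) (a : A), ∃ h : A, α p h = α p 1 * a * α p 1)
    {H L : Type*}
    [NormedAddCommGroup H] [InnerProductSpace ℂ H] [CompleteSpace H]
    [NormedAddCommGroup L] [InnerProductSpace ℂ L] [CompleteSpace L]
    (π : A →⋆ₐ[ℂ] (H →L[ℂ] H))
    (V : P →* (H →L[ℂ] H))
    (hiso : ∀ p : P, star (V p) * V p = 1)
    (hcov : ∀ (p : P) (a : A), V p * π a = π (α p a) * V p)
    (q : P) (T : L →L[ℂ] H)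
    (hT1 : adjoint T ∘L T = 1)
    (hT2 : T ∘L adjoint T = π (α q 1) - V q * star (V q)) :
    ∀ p r : P,
      (V p * star (V q) * V r) ∘L T +
          (star (V q) * V p * (T ∘L adjoint T) * V r) ∘L T =
        (star (V q) * V (p * r)) ∘L T ∧
      (adjoint T ∘L (V p ∘L T)) ∘L (adjoint T ∘L (V r ∘L T)) =
        adjoint T ∘L (V (p * r) ∘L T) := by
  intro p r
  -- (f * g) ∘L t = f ∘L (g ∘L t)
  have mc : ∀ (f g : H →L[ℂ] H) (t : L →L[ℂ] H), (f * g) ∘L t = f ∘L (g ∘L t) := by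
    intro f g t; rfl
  have hAsa : ∀ s : P, star (α s (1:A)) = α s 1 := by
    intro s; rw [← map_star, star_one]
  have hπsa : ∀ s : P, star (π (α s (1:A))) = π (α s 1) := by
    intro s; rw [← map_star, hAsa]
  have hVπ : ∀ s : P, π (α s 1) * V s = V s := by
    intro s
    have h := hcov s 1
    rw [map_one, mul_one] at h
    exact h.symm
  have hπV : ∀ s : P, star (V s) * π (α s 1) = star (V s) := by
    intro s
    have h := congrArg star (hVπ s)
    rwa [star_mul, hπsa] at h
  have hswap : ∀ s t : P, star (V s) * π (α (s * t) 1) = π (α t 1) * star (V s) := by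
    intro s t
    have h := hcov s (α t 1)
    rw [hcomp] at h
    have h2 := congrArg star h
    rw [star_mul, star_mul, hπsa, hπsa] at h2
    exact h2.symm
  have hVcomm : ∀ s t : P, V s * V t = V t * V s := by
    intro s t; rw [← map_mul, mul_comm, map_mul]
  have hTTT : (T ∘L adjoint T) ∘L T = T := by
    rw [comp_assoc, hT1]; ext x; rfl
  have hA : star (V q) ∘L T = 0 := by
    have h1 : star (V q) ∘L T = (star (V q) * (T ∘L adjoint T)) ∘L T := by
      rw [mc, hTTT]
    rw [h1, hT2]
    have h0 : star (V q) * (π (α q 1) - V q * star (V q)) = 0 := by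
      rw [mul_sub, hπV, ← mul_assoc, hiso, one_mul, sub_self]
    rw [h0, zero_comp]
  have hAdj : adjoint T ∘L V q = 0 := by
    have h := congrArg adjoint hA
    rwa [adjoint_comp, ← star_eq_adjoint, star_star, map_zero] at h
  have hB : π (α q 1) ∘L T = T := by
    have h := congrArg (fun f : H →L[ℂ] H => f ∘L T) hT2
    rw [hTTT, sub_comp, mc, hA, comp_zero, sub_zero] at h
    exact h.symm
  have hC : ∀ s : P, (π (α q 1) * V s) ∘L T = V s ∘L T := by
    intro s
    have h1 : V s ∘L T = (π (α (s * q) 1) * V s) ∘L T := by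
      conv_lhs => rw [← hB, ← mc]
      have h := hcov s (α q 1)
      rw [hcomp] at h
      rw [h]
    have h2 : π (α q 1) * π (α (s * q) 1) = π (α (s * q) 1) := by
      rw [← map_mul]
      congr 1
      rw [mul_comm s q, ← hcomp q s, ← map_mul, one_mul]
    calc (π (α q 1) * V s) ∘L T = π (α q 1) ∘L (V s ∘L T) := mc _ _ _
      _ = π (α q 1) ∘L ((π (α (s * q) 1) * V s) ∘L T) := by rw [← h1]
      _ = (π (α q 1) * (π (α (s * q) 1) * V s)) ∘L T := (mc _ _ _).symm
      _ = (π (α (s * q) 1) * V s) ∘L T := by rw [← mul_assoc, h2]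
      _ = V s ∘L T := h1.symm
  constructor
  · -- first identity
    -- key ring identity for the middle factor
    have E1 : star (V q) * V p * π (α q 1) = π (α p 1) * star (V q) * V p := by
      have h := hcov p (α q 1)
      rw [hcomp] at h
      rw [mul_assoc, h, ← mul_assoc, mul_comm p q, hswap]
    have E2 : star (V q) * V p * (V q * star (V q)) * V r = V p * star (V q) * V r := by
      have h3 : star (V q) * V p * V q = V p := by
        rw [mul_assoc, hVcomm p q, ← mul_assoc, hiso, one_mul]
      rw [← mul_assoc, h3]
    have key : star (V q) * V p * (T ∘L adjoint T) * V r
        = π (α p 1) * star (V q) * V (p * r) - V p * star (V q) * V r := by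
      rw [hT2, mul_sub, sub_mul, E2, mul_assoc (star (V q) * V p), ← mul_assoc, E1,
        mul_assoc (π (α p 1) * star (V q)), ← map_mul]
    rw [key, sub_comp, add_sub_cancel]
    -- remaining: (π (α p 1) * star (V q) * V (p*r)) ∘L T = (star (V q) * V (p*r)) ∘L T
    have h4 : π (α p 1) * star (V q) * V (p * r)
        = star (V q) * (V p * (π (α q 1) * V r)) := by
      rw [← hswap q p, mul_assoc, map_mul]
      congr 1
      have h := hcov p (α q 1)
      rw [hcomp] at h
      rw [← mul_assoc, mul_comm q p, ← h, mul_assoc]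
    rw [h4, mc, mc, hC r, ← mc, ← mc, mul_assoc, ← map_mul]
  · -- second identity
    have step1 : (adjoint T ∘L (V p ∘L T)) ∘L (adjoint T ∘L (V r ∘L T))
        = adjoint T ∘L (V p ∘L ((T ∘L adjoint T) ∘L (V r ∘L T))) := by
      simp only [comp_assoc]
    rw [step1, hT2, sub_comp, ← mc (π (α q 1)) (V r) T, hC r, mc (V q) (star (V q))]
    rw [comp_sub, comp_sub]
    have z : adjoint T ∘L (V p ∘L (V q ∘L (star (V q) ∘L (V r ∘L T)))) = 0 := by
      have h5 : V p ∘L (V q ∘L (star (V q) ∘L (V r ∘L T)))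
          = V q ∘L (V p ∘L (star (V q) ∘L (V r ∘L T))) := by
        rw [← mc, hVcomm p q, mc]
      rw [h5, ← comp_assoc, hAdj, zero_comp]
    rw [z, sub_zero, ← mc, ← map_mul]
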